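/- Let R be a commutative ring and let (C, d) be a cochain complex of R-modules such that in degrees n and n+1 there are direct sum decompositions C^n = C₁^n ⊕ C₂^n and C^{n+1} = C₁^{n+1} ⊕ C₂^{n+1}, with differential d^n given in block form by the matrix [[φ, δ], [γ, ε]]. If φ : C₁^n → C₁^{n+1} is an isomorphism, then C is chain homotopy equivalent to the complex C' which agrees with C outside degrees n, n+1, has C'^n = C₂^n and C'^{n+1} = C₂^{n+1}, with differential ε − γ∘φ⁻¹∘δ in degree n, the restriction β of d^{n-1} to the second summand in degree n−1, and the restriction ν of d^{n+1} to the second summand in degree n+1. -/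

import Mathlib

open CategoryTheory CategoryTheory.Limits

section

variable {R : Type} [CommRing R]

/-- Block entry `φ : C₁ⁿ → C₁ⁿ⁺¹` of the differential `dⁿ` with respect to the direct sum
decompositions `C.X n ≅ A ⊞ B`, `C.X (n+1) ≅ A' ⊞ B'`. -/
noncomputable def blkPhi (C : CochainComplex (ModuleCat R) ℤ) (n : ℤ)
    {A B A' B' : ModuleCat R} (e₁ : C.X n ≅ A ⊞ B) (e₂ : C.X (n + 1) ≅ A' ⊞ B') :
    A ⟶ A' :=
  biprod.inl ≫ e₁.inv ≫ C.d n (n + 1) ≫ e₂.hom ≫ biprod.fst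

/-- Block entry `δ : C₂ⁿ → C₁ⁿ⁺¹`. -/
noncomputable def blkDelta (C : CochainComplex (ModuleCat R) ℤ) (n : ℤ)
    {A B A' B' : ModuleCat R} (e₁ : C.X n ≅ A ⊞ B) (e₂ : C.X (n + 1) ≅ A' ⊞ B') :
    B ⟶ A' :=
  biprod.inr ≫ e₁.inv ≫ C.d n (n + 1) ≫ e₂.hom ≫ biprod.fst

/-- Block entry `γ : C₁ⁿ → C₂ⁿ⁺¹`. -/
noncomputable def blkGamma (C : CochainComplex (ModuleCat R) ℤ) (n : ℤ)
    {A B A' B' : ModuleCat R} (e₁ : C.X n ≅ A ⊞ B) (e₂ : C.X (n + 1) ≅ A' ⊞ B') :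
    A ⟶ B' :=
  biprod.inl ≫ e₁.inv ≫ C.d n (n + 1) ≫ e₂.hom ≫ biprod.snd

/-- Block entry `ε : C₂ⁿ → C₂ⁿ⁺¹`. -/
noncomputable def blkEps (C : CochainComplex (ModuleCat R) ℤ) (n : ℤ)
    {A B A' B' : ModuleCat R} (e₁ : C.X n ≅ A ⊞ B) (e₂ : C.X (n + 1) ≅ A' ⊞ B') :
    B ⟶ B' :=
  biprod.inr ≫ e₁.inv ≫ C.d n (n + 1) ≫ e₂.hom ≫ biprod.snd

namespace Stmt9Aux

variable (C : CochainComplex (ModuleCat R) ℤ) (n : ℤ)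
variable {A B A' B' : ModuleCat R}

/-- The degree function of the new complex. -/
noncomputable def X' (B B' : ModuleCat R) (i : ℤ) : ModuleCat R :=
  if i = n then B else if i = n + 1 then B' else C.X i

lemma X'_n : X' C n B B' n = B := by simp [X']

lemma X'_n1 : X' C n B B' (n + 1) = B' := by
  have : ¬ (n + 1 = n) := by omega
  simp [X', this]

lemma X'_ne (i : ℤ) (h1 : i ≠ n) (h2 : i ≠ n + 1) : X' C n B B' i = C.X i := by
  simp [X', h1, h2]

variable (e₁ : C.X n ≅ A ⊞ B) (e₂ : C.X (n + 1) ≅ A' ⊞ B')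

/-- First component of `d^{n-1}`. -/
noncomputable def alpha : C.X (n - 1) ⟶ A :=
  C.d (n - 1) n ≫ e₁.hom ≫ biprod.fst

/-- Second component of `d^{n-1}`. -/
noncomputable def beta : C.X (n - 1) ⟶ B :=
  C.d (n - 1) n ≫ e₁.hom ≫ biprod.snd

/-- Restriction of `d^{n+1}` to the first summand. -/
noncomputable def mu : A' ⟶ C.X (n + 1 + 1) :=
  biprod.inl ≫ e₂.inv ≫ C.d (n + 1) (n + 1 + 1)

/-- Restriction of `d^{n+1}` to the second summand. -/
noncomputable def nu : B' ⟶ C.X (n + 1 + 1) :=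
  biprod.inr ≫ e₂.inv ≫ C.d (n + 1) (n + 1 + 1)

lemma hd_mid : e₁.inv ≫ C.d n (n + 1) ≫ e₂.hom =
    biprod.desc (biprod.lift (blkPhi C n e₁ e₂) (blkGamma C n e₁ e₂))
      (biprod.lift (blkDelta C n e₁ e₂) (blkEps C n e₁ e₂)) := by
  apply biprod.hom_ext' <;> apply biprod.hom_ext <;>
    simp [blkPhi, blkGamma, blkDelta, blkEps]

lemma hd : C.d n (n + 1) =
    e₁.hom ≫ biprod.desc (biprod.lift (blkPhi C n e₁ e₂) (blkGamma C n e₁ e₂))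
      (biprod.lift (blkDelta C n e₁ e₂) (blkEps C n e₁ e₂)) ≫ e₂.inv := by
  rw [← hd_mid]; simp

lemma hprev : C.d (n - 1) n = biprod.lift (alpha C n e₁) (beta C n e₁) ≫ e₁.inv := by
  apply (Iso.cancel_iso_hom_right _ _ e₁).1
  apply biprod.hom_ext <;> simp [alpha, beta]

lemma hnext : C.d (n + 1) (n + 1 + 1) = e₂.hom ≫ biprod.desc (mu C n e₂) (nu C n e₂) := by
  rw [← Iso.inv_comp_eq]
  apply biprod.hom_ext' <;> simp [mu, nu]

section Keys
variable (ψ : A' ⟶ A) (hψ₁ : blkPhi C n e₁ e₂ ≫ ψ = 𝟙 A) (hψ₂ : ψ ≫ blkPhi C n e₁ e₂ = 𝟙 A')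

lemma key1 : alpha C n e₁ ≫ blkPhi C n e₁ e₂ + beta C n e₁ ≫ blkDelta C n e₁ e₂ = 0 := by
  have h := C.d_comp_d (n - 1) n (n + 1)
  rw [hprev C n e₁, hd C n e₁ e₂] at h
  simpa using congrArg (fun t => t ≫ e₂.hom ≫ biprod.fst) h

lemma key2 : alpha C n e₁ ≫ blkGamma C n e₁ e₂ + beta C n e₁ ≫ blkEps C n e₁ e₂ = 0 := by
  have h := C.d_comp_d (n - 1) n (n + 1)
  rw [hprev C n e₁, hd C n e₁ e₂] at h
  simpa using congrArg (fun t => t ≫ e₂.hom ≫ biprod.snd) h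

lemma key3 : blkPhi C n e₁ e₂ ≫ mu C n e₂ + blkGamma C n e₁ e₂ ≫ nu C n e₂ = 0 := by
  have h := C.d_comp_d n (n + 1) (n + 1 + 1)
  rw [hd C n e₁ e₂, hnext C n e₂] at h
  simpa using congrArg (fun t => biprod.inl ≫ e₁.inv ≫ t) h

lemma key4 : blkDelta C n e₁ e₂ ≫ mu C n e₂ + blkEps C n e₁ e₂ ≫ nu C n e₂ = 0 := by
  have h := C.d_comp_d n (n + 1) (n + 1 + 1)
  rw [hd C n e₁ e₂, hnext C n e₂] at h
  simpa using congrArg (fun t => biprod.inr ≫ e₁.inv ≫ t) h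

end Keys

section Alg
variable (ψ : A' ⟶ A)

lemma psi_cancel_right (hψ₂ : ψ ≫ blkPhi C n e₁ e₂ = 𝟙 A') {Z : ModuleCat R}
    (k : A' ⟶ Z) : ψ ≫ blkPhi C n e₁ e₂ ≫ k = k := by
  rw [← Category.assoc, hψ₂, Category.id_comp]

lemma phi_cancel_right (hψ₁ : blkPhi C n e₁ e₂ ≫ ψ = 𝟙 A) {Z : ModuleCat R}
    (k : A ⟶ Z) : blkPhi C n e₁ e₂ ≫ ψ ≫ k = k := by
  rw [← Category.assoc, hψ₁, Category.id_comp]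

lemma alg1 (hψ₂ : ψ ≫ blkPhi C n e₁ e₂ = 𝟙 A') :
    (blkEps C n e₁ e₂ - blkDelta C n e₁ e₂ ≫ ψ ≫ blkGamma C n e₁ e₂) ≫
      biprod.inr ≫ e₂.inv ≫ C.d (n + 1) (n + 1 + 1) = 0 := by
  have h3 : blkGamma C n e₁ e₂ ≫ nu C n e₂ = -(blkPhi C n e₁ e₂ ≫ mu C n e₂) :=
    eq_neg_of_add_eq_zero_right (key3 C n e₁ e₂)
  have h4 : blkEps C n e₁ e₂ ≫ nu C n e₂ = -(blkDelta C n e₁ e₂ ≫ mu C n e₂) :=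
    eq_neg_of_add_eq_zero_right (key4 C n e₁ e₂)
  have : (blkEps C n e₁ e₂ - blkDelta C n e₁ e₂ ≫ ψ ≫ blkGamma C n e₁ e₂) ≫ nu C n e₂ = 0 := by
    simp only [Preadditive.sub_comp, Category.assoc, h3, h4, Preadditive.comp_neg,
      psi_cancel_right C n e₁ e₂ ψ hψ₂]
    abel
  simpa [nu] using this

lemma alg2 (hψ₁ : blkPhi C n e₁ e₂ ≫ ψ = 𝟙 A) :
    beta C n e₁ ≫ (blkEps C n e₁ e₂ - blkDelta C n e₁ e₂ ≫ ψ ≫ blkGamma C n e₁ e₂) = 0 := by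
  have h1 : beta C n e₁ ≫ blkDelta C n e₁ e₂ = -(alpha C n e₁ ≫ blkPhi C n e₁ e₂) :=
    eq_neg_of_add_eq_zero_right (key1 C n e₁ e₂)
  have h2 : beta C n e₁ ≫ blkEps C n e₁ e₂ = -(alpha C n e₁ ≫ blkGamma C n e₁ e₂) :=
    eq_neg_of_add_eq_zero_right (key2 C n e₁ e₂)
  have h1' : beta C n e₁ ≫ blkDelta C n e₁ e₂ ≫ ψ ≫ blkGamma C n e₁ e₂ =
      -(alpha C n e₁ ≫ blkGamma C n e₁ e₂) := by
    rw [← Category.assoc, h1]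
    simp only [Preadditive.neg_comp, Category.assoc, phi_cancel_right C n e₁ e₂ ψ hψ₁]
  simp only [Preadditive.comp_sub, h1', h2]
  abel

end Alg

section Dnew
variable (ψ : A' ⟶ A)

noncomputable def d' (i : ℤ) : X' C n B B' i ⟶ X' C n B B' (i + 1) :=
  if h : i = n then
    eqToHom (by rw [h]; exact X'_n C n) ≫
      (blkEps C n e₁ e₂ - blkDelta C n e₁ e₂ ≫ ψ ≫ blkGamma C n e₁ e₂) ≫
      eqToHom (by rw [h]; exact (X'_n1 C n).symm)
  else if h' : i + 1 = n then
    eqToHom (X'_ne C n i h (by omega)) ≫ C.d i (i + 1) ≫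
      eqToHom (congrArg C.X h') ≫ e₁.hom ≫ biprod.snd ≫
      eqToHom (by rw [h']; exact (X'_n C n).symm)
  else if h'' : i = n + 1 then
    eqToHom (by rw [h'']; exact X'_n1 C n) ≫ biprod.inr ≫ e₂.inv ≫
      C.d (n + 1) (n + 1 + 1) ≫ eqToHom (congrArg C.X (by omega : n + 1 + 1 = i + 1)) ≫
      eqToHom ((X'_ne C n (i + 1) (by omega) (by omega)).symm)
  else
    eqToHom (X'_ne C n i h (by omega)) ≫ C.d i (i + 1) ≫
      eqToHom (X'_ne C n (i + 1) (by omega) (by omega)).symm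

lemma d_congr_left {K : CochainComplex (ModuleCat R) ℤ} {i i' j : ℤ} (h : i' = i) :
    K.d i' j = eqToHom (congrArg K.X h) ≫ K.d i j := by subst h; simp

lemma d'_congr {i j : ℤ} (h : i = j) : d' C n e₁ e₂ ψ i =
    eqToHom (congrArg (X' C n B B') h) ≫ d' C n e₁ e₂ ψ j ≫
      eqToHom (congrArg (X' C n B B') (show j + 1 = i + 1 by rw [h])) := by
  subst h; simp

lemma d'_n : d' C n e₁ e₂ ψ n =
    eqToHom (X'_n C n) ≫
      (blkEps C n e₁ e₂ - blkDelta C n e₁ e₂ ≫ ψ ≫ blkGamma C n e₁ e₂) ≫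
      eqToHom (X'_n1 C n).symm := by
  rw [d', dif_pos rfl]

lemma d'_prev (i : ℤ) (h' : i + 1 = n) : d' C n e₁ e₂ ψ i =
    eqToHom (X'_ne C n i (by omega) (by omega)) ≫ C.d i (i + 1) ≫
      eqToHom (congrArg C.X h') ≫ e₁.hom ≫ biprod.snd ≫
      eqToHom (by rw [h']; exact (X'_n C n).symm) := by
  rw [d', dif_neg (by omega), dif_pos h']

lemma d'_n1 : d' C n e₁ e₂ ψ (n + 1) =
    eqToHom (X'_n1 C n) ≫ biprod.inr ≫ e₂.inv ≫
      C.d (n + 1) (n + 1 + 1) ≫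
      eqToHom ((X'_ne C n (n + 1 + 1) (ne_of_gt (by omega)) (ne_of_gt (by omega))).symm) := by
  rw [d', dif_neg (by omega), dif_neg (by omega), dif_pos rfl]
  simp

lemma d'_generic (i : ℤ) (h1 : i ≠ n - 1) (h2 : i ≠ n) (h3 : i ≠ n + 1) :
    d' C n e₁ e₂ ψ i =
    eqToHom (X'_ne C n i h2 h3) ≫ C.d i (i + 1) ≫
      eqToHom (X'_ne C n (i + 1) (fun h => h1 (by omega)) (fun h => h2 (by omega))).symm := by
  rw [d', dif_neg h2, dif_neg (by omega), dif_neg h3]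

lemma d'_sq (hψ₁ : blkPhi C n e₁ e₂ ≫ ψ = 𝟙 A) (hψ₂ : ψ ≫ blkPhi C n e₁ e₂ = 𝟙 A')
    (i : ℤ) : d' C n e₁ e₂ ψ i ≫ d' C n e₁ e₂ ψ (i + 1) = 0 := by
  by_cases h : i = n
  · subst h
    rw [d'_n, d'_n1]
    have t := reassoc_of% (alg1 C i e₁ e₂ ψ hψ₂)
    simp only [Category.assoc, eqToHom_trans_assoc, eqToHom_refl, Category.id_comp]
    rw [t]
    simp
  · by_cases h' : i + 1 = n
    · subst h'
      rw [d'_prev C (i + 1) e₁ e₂ ψ i rfl, d'_n]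
      have t : (C.d (i + 1 - 1) (i + 1) ≫ e₁.hom ≫ biprod.snd) ≫
          (blkEps C (i + 1) e₁ e₂ - blkDelta C (i + 1) e₁ e₂ ≫ ψ ≫ blkGamma C (i + 1) e₁ e₂) =
          0 := alg2 C (i + 1) e₁ e₂ ψ hψ₁
      rw [d_congr_left (show i = i + 1 - 1 by omega) (K := C)]
      simp only [Category.assoc, eqToHom_trans, eqToHom_trans_assoc, eqToHom_refl,
        Category.id_comp, Category.comp_id]
      rw [reassoc_of% t]
      simp
    · by_cases h'' : i = n + 1
      · subst h''
        rw [d'_n1, d'_generic C n e₁ e₂ ψ (n + 1 + 1) (by omega) (by omega) (by omega)]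
        simp
      · by_cases hp : i + 1 + 1 = n
        · rw [d'_generic C n e₁ e₂ ψ i (by omega) h h'',
            d'_prev C n e₁ e₂ ψ (i + 1) hp]
          simp
        · rw [d'_generic C n e₁ e₂ ψ i (by omega) h h'',
            d'_generic C n e₁ e₂ ψ (i + 1) (by omega) (by omega) (by omega)]
          simp

end Dnew

section Maps
variable (ψ : A' ⟶ A)

noncomputable def fHom (i : ℤ) : C.X i ⟶ X' C n B B' i :=
  if h : i = n then
    eqToHom (congrArg C.X h) ≫ e₁.hom ≫ biprod.snd ≫
      eqToHom (by rw [h]; exact (X'_n C n).symm)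
  else if h' : i = n + 1 then
    eqToHom (congrArg C.X h') ≫ e₂.hom ≫
      (biprod.snd - biprod.fst ≫ ψ ≫ blkGamma C n e₁ e₂) ≫
      eqToHom (by rw [h']; exact (X'_n1 C n).symm)
  else
    eqToHom (X'_ne C n i h h').symm

lemma fHom_n : fHom C n e₁ e₂ ψ n = e₁.hom ≫ biprod.snd ≫ eqToHom (X'_n C n).symm := by
  rw [fHom, dif_pos rfl]; simp

lemma fHom_n1 : fHom C n e₁ e₂ ψ (n + 1) =
    e₂.hom ≫ (biprod.snd - biprod.fst ≫ ψ ≫ blkGamma C n e₁ e₂) ≫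
      eqToHom (X'_n1 C n).symm := by
  rw [fHom, dif_neg (by omega), dif_pos rfl]; simp

lemma fHom_generic (i : ℤ) (h : i ≠ n) (h' : i ≠ n + 1) :
    fHom C n e₁ e₂ ψ i = eqToHom (X'_ne C n i h h').symm := by
  rw [fHom, dif_neg h, dif_neg h']

noncomputable def gHom (i : ℤ) : X' C n B B' i ⟶ C.X i :=
  if h : i = n then
    eqToHom (by rw [h]; exact X'_n C n) ≫
      biprod.lift (-(blkDelta C n e₁ e₂ ≫ ψ)) (𝟙 B) ≫ e₁.inv ≫
      eqToHom (congrArg C.X h).symm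
  else if h' : i = n + 1 then
    eqToHom (by rw [h']; exact X'_n1 C n) ≫ biprod.inr ≫ e₂.inv ≫
      eqToHom (congrArg C.X h').symm
  else
    eqToHom (X'_ne C n i h h')

lemma gHom_n : gHom C n e₁ e₂ ψ n =
    eqToHom (X'_n C n) ≫ biprod.lift (-(blkDelta C n e₁ e₂ ≫ ψ)) (𝟙 B) ≫ e₁.inv := by
  rw [gHom, dif_pos rfl]; simp

lemma gHom_n1 : gHom C n e₁ e₂ ψ (n + 1) =
    eqToHom (X'_n1 C n) ≫ biprod.inr ≫ e₂.inv := by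
  rw [gHom, dif_neg (by omega), dif_pos rfl]; simp

lemma gHom_generic (i : ℤ) (h : i ≠ n) (h' : i ≠ n + 1) :
    gHom C n e₁ e₂ ψ i = eqToHom (X'_ne C n i h h') := by
  rw [gHom, dif_neg h, dif_neg h']

lemma algF (hψ₁ : blkPhi C n e₁ e₂ ≫ ψ = 𝟙 A) :
    biprod.snd ≫ (blkEps C n e₁ e₂ - blkDelta C n e₁ e₂ ≫ ψ ≫ blkGamma C n e₁ e₂) =
      biprod.desc (biprod.lift (blkPhi C n e₁ e₂) (blkGamma C n e₁ e₂))
        (biprod.lift (blkDelta C n e₁ e₂) (blkEps C n e₁ e₂)) ≫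
      (biprod.snd - biprod.fst ≫ ψ ≫ blkGamma C n e₁ e₂) := by
  apply biprod.hom_ext' <;>
    simp [Preadditive.comp_sub, phi_cancel_right C n e₁ e₂ ψ hψ₁, hψ₁]

lemma algF2 (hψ₂ : ψ ≫ blkPhi C n e₁ e₂ = 𝟙 A') :
    (biprod.snd - biprod.fst ≫ ψ ≫ blkGamma C n e₁ e₂) ≫
      biprod.inr ≫ e₂.inv ≫ C.d (n + 1) (n + 1 + 1) =
      e₂.inv ≫ C.d (n + 1) (n + 1 + 1) := by
  have h3 : blkGamma C n e₁ e₂ ≫ nu C n e₂ = -(blkPhi C n e₁ e₂ ≫ mu C n e₂) :=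
    eq_neg_of_add_eq_zero_right (key3 C n e₁ e₂)
  have hn : e₂.inv ≫ C.d (n + 1) (n + 1 + 1) = biprod.desc (mu C n e₂) (nu C n e₂) := by
    rw [Iso.inv_comp_eq]; exact hnext C n e₂
  show (biprod.snd - biprod.fst ≫ ψ ≫ blkGamma C n e₁ e₂) ≫ nu C n e₂ = _
  rw [hn]
  apply biprod.hom_ext' <;>
    simp [Preadditive.sub_comp, Preadditive.comp_sub, h3,
      psi_cancel_right C n e₁ e₂ ψ hψ₂, hψ₂]

lemma algG1 (hψ₂ : ψ ≫ blkPhi C n e₁ e₂ = 𝟙 A') :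
    biprod.lift (-(blkDelta C n e₁ e₂ ≫ ψ)) (𝟙 B) ≫ e₁.inv ≫ C.d n (n + 1) ≫ e₂.hom =
      (blkEps C n e₁ e₂ - blkDelta C n e₁ e₂ ≫ ψ ≫ blkGamma C n e₁ e₂) ≫ biprod.inr := by
  rw [hd_mid]
  apply biprod.hom_ext <;>
    simp [biprod.lift_desc, Preadditive.sub_comp,
      psi_cancel_right C n e₁ e₂ ψ hψ₂, hψ₂]
  abel

lemma algG2 (hψ₁ : blkPhi C n e₁ e₂ ≫ ψ = 𝟙 A) :
    biprod.lift (alpha C n e₁) (beta C n e₁) ≫ biprod.snd ≫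
      biprod.lift (-(blkDelta C n e₁ e₂ ≫ ψ)) (𝟙 B) =
      biprod.lift (alpha C n e₁) (beta C n e₁) := by
  have h1 : beta C n e₁ ≫ blkDelta C n e₁ e₂ = -(alpha C n e₁ ≫ blkPhi C n e₁ e₂) :=
    eq_neg_of_add_eq_zero_right (key1 C n e₁ e₂)
  apply biprod.hom_ext
  · simp only [Category.assoc, biprod.lift_snd_assoc, biprod.lift_fst,
      Preadditive.comp_neg]
    rw [← Category.assoc, h1]
    simp [Category.assoc, hψ₁]
  · simp

lemma algH1 (hψ₁ : blkPhi C n e₁ e₂ ≫ ψ = 𝟙 A) :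
    biprod.snd ≫ biprod.lift (-(blkDelta C n e₁ e₂ ≫ ψ)) (𝟙 B) =
      (e₁.inv ≫ C.d n (n + 1) ≫ e₂.hom) ≫ (-(biprod.fst ≫ ψ ≫ biprod.inl)) +
        𝟙 (A ⊞ B) := by
  rw [hd_mid]
  apply biprod.hom_ext' <;> apply biprod.hom_ext <;>
    simp [biprod.lift_desc, phi_cancel_right C n e₁ e₂ ψ hψ₁, hψ₁]

lemma algH2 (hψ₂ : ψ ≫ blkPhi C n e₁ e₂ = 𝟙 A') :
    (biprod.snd - biprod.fst ≫ ψ ≫ blkGamma C n e₁ e₂) ≫ biprod.inr =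
      -(biprod.fst ≫ ψ ≫ biprod.inl) ≫ (e₁.inv ≫ C.d n (n + 1) ≫ e₂.hom) +
        𝟙 (A' ⊞ B') := by
  rw [hd_mid]
  apply biprod.hom_ext' <;> apply biprod.hom_ext <;>
    simp [Preadditive.sub_comp, psi_cancel_right C n e₁ e₂ ψ hψ₂, hψ₂]

lemma algG1' (hψ₂ : ψ ≫ blkPhi C n e₁ e₂ = 𝟙 A') :
    biprod.lift (-(blkDelta C n e₁ e₂ ≫ ψ)) (𝟙 B) ≫ e₁.inv ≫ C.d n (n + 1) =
      (blkEps C n e₁ e₂ - blkDelta C n e₁ e₂ ≫ ψ ≫ blkGamma C n e₁ e₂) ≫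
        biprod.inr ≫ e₂.inv := by
  apply (cancel_mono e₂.hom).1
  simp only [Category.assoc, Iso.inv_hom_id, Category.comp_id]
  exact algG1 C n e₁ e₂ ψ hψ₂

end Maps

lemma d_cast (K : CochainComplex (ModuleCat R) ℤ) {i j : ℤ} (h : i + 1 = j) :
    K.d i j = K.d i (i + 1) ≫ eqToHom (congrArg K.X h) := by
  subst h; simp

section Equiv
variable (ψ : A' ⟶ A) (hψ₁ : blkPhi C n e₁ e₂ ≫ ψ = 𝟙 A)
  (hψ₂ : ψ ≫ blkPhi C n e₁ e₂ = 𝟙 A')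

@[reducible] noncomputable def Cnew : CochainComplex (ModuleCat R) ℤ :=
  CochainComplex.of (X' C n B B') (d' C n e₁ e₂ ψ) (d'_sq C n e₁ e₂ ψ hψ₁ hψ₂)

lemma Cnew_d (i : ℤ) : (Cnew C n e₁ e₂ ψ hψ₁ hψ₂).d i (i + 1) = d' C n e₁ e₂ ψ i :=
  CochainComplex.of_d _ _ i

noncomputable def F : C ⟶ Cnew C n e₁ e₂ ψ hψ₁ hψ₂ where
  f := fHom C n e₁ e₂ ψ
  comm' := by
    intro i j hij
    obtain rfl : i + 1 = j := hij
    rw [Cnew_d]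
    by_cases h : i = n
    · subst h
      rw [fHom_n, d'_n, fHom_n1, hd C i e₁ e₂]
      simp only [Category.assoc, eqToHom_trans_assoc, eqToHom_refl, Category.id_comp,
        Iso.inv_hom_id_assoc]
      rw [reassoc_of% (algF C i e₁ e₂ ψ hψ₁)]
    · by_cases h' : i + 1 = n
      · subst h'
        rw [fHom_generic C (i + 1) e₁ e₂ ψ i (by omega) (by omega),
          d'_prev C (i + 1) e₁ e₂ ψ i rfl, fHom_n]
        simp [eqToHom_trans_assoc]
      · by_cases h'' : i = n + 1
        · subst h''
          rw [fHom_n1, d'_n1, fHom_generic C n e₁ e₂ ψ (n + 1 + 1) (by omega) (ne_of_gt (by omega))]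
          simp only [Category.assoc, eqToHom_trans_assoc, eqToHom_refl, Category.id_comp]
          rw [reassoc_of% (algF2 C n e₁ e₂ ψ hψ₂)]
          simp
        · rw [fHom_generic C n e₁ e₂ ψ i h h'',
            d'_generic C n e₁ e₂ ψ i (by omega) h h'',
            fHom_generic C n e₁ e₂ ψ (i + 1) (by omega) (by omega)]
          simp

noncomputable def G : Cnew C n e₁ e₂ ψ hψ₁ hψ₂ ⟶ C where
  f := gHom C n e₁ e₂ ψ
  comm' := by
    intro i j hij
    obtain rfl : i + 1 = j := hij
    rw [Cnew_d]
    by_cases h : i = n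
    · subst h
      rw [gHom_n, d'_n, gHom_n1]
      simp only [Category.assoc]
      rw [algG1' C i e₁ e₂ ψ hψ₂]
      simp
    · by_cases h' : i + 1 = n
      · subst h'
        rw [gHom_generic C (i + 1) e₁ e₂ ψ i (by omega) (by omega),
          d'_prev C (i + 1) e₁ e₂ ψ i rfl, gHom_n]
        rw [d_congr_left (show i = i + 1 - 1 by omega) (K := C), hprev C (i + 1) e₁]
        simp only [Category.assoc, eqToHom_trans_assoc, eqToHom_refl, Category.id_comp,
          Iso.inv_hom_id_assoc]
        rw [reassoc_of% (algG2 C (i + 1) e₁ e₂ ψ hψ₁)]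
      · by_cases h'' : i = n + 1
        · subst h''
          rw [gHom_n1, d'_n1, gHom_generic C n e₁ e₂ ψ (n + 1 + 1) (by omega) (ne_of_gt (by omega))]
          simp
        · rw [gHom_generic C n e₁ e₂ ψ i h h'',
            d'_generic C n e₁ e₂ ψ i (by omega) h h'',
            gHom_generic C n e₁ e₂ ψ (i + 1) (by omega) (by omega)]
          simp

lemma gf : G C n e₁ e₂ ψ hψ₁ hψ₂ ≫ F C n e₁ e₂ ψ hψ₁ hψ₂ = 𝟙 _ := by
  ext i
  simp only [HomologicalComplex.comp_f, HomologicalComplex.id_f, F, G]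
  by_cases h : i = n
  · subst h
    rw [gHom_n, fHom_n]
    simp
  · by_cases h' : i = n + 1
    · subst h'
      rw [gHom_n1, fHom_n1]
      simp [Preadditive.comp_sub]
    · rw [gHom_generic C n e₁ e₂ ψ i h h', fHom_generic C n e₁ e₂ ψ i h h']
      simp

noncomputable def hHom (i j : ℤ) : C.X i ⟶ C.X j :=
  if hc : i = n + 1 ∧ j = n then
    eqToHom (congrArg C.X hc.1) ≫
      (-(e₂.hom ≫ biprod.fst ≫ ψ ≫ biprod.inl ≫ e₁.inv)) ≫
      eqToHom (congrArg C.X hc.2).symm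
  else 0

lemma hHom_pos (i j : ℤ) (h1 : i = n + 1) (h2 : j = n) : hHom C n e₁ e₂ ψ i j =
    eqToHom (congrArg C.X h1) ≫
      (-(e₂.hom ≫ biprod.fst ≫ ψ ≫ biprod.inl ≫ e₁.inv)) ≫
      eqToHom (congrArg C.X h2).symm := by
  rw [hHom, dif_pos ⟨h1, h2⟩]

lemma hHom_zero (i j : ℤ) (h : ¬(i = n + 1 ∧ j = n)) : hHom C n e₁ e₂ ψ i j = 0 := by
  rw [hHom, dif_neg h]

noncomputable def H : Homotopy (F C n e₁ e₂ ψ hψ₁ hψ₂ ≫ G C n e₁ e₂ ψ hψ₁ hψ₂) (𝟙 C) where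
  hom := hHom C n e₁ e₂ ψ
  zero := by
    intro i j hz
    rw [hHom, dif_neg]
    rintro ⟨rfl, rfl⟩
    exact hz rfl
  comm := by
    intro i
    rw [dNext_eq (hHom C n e₁ e₂ ψ) (show (ComplexShape.up ℤ).Rel i (i + 1) from rfl),
      prevD_eq (hHom C n e₁ e₂ ψ) (show (ComplexShape.up ℤ).Rel (i - 1) i by
        show i - 1 + 1 = i; omega)]
    simp only [HomologicalComplex.comp_f, HomologicalComplex.id_f, F, G]
    by_cases h : i = n
    · subst h
      rw [hHom_pos C i e₁ e₂ ψ (i + 1) i rfl rfl,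
        hHom_zero C i e₁ e₂ ψ i (i - 1) (by omega), fHom_n, gHom_n]
      simp only [Category.assoc, eqToHom_trans_assoc, eqToHom_refl, Category.id_comp,
        Category.comp_id, zero_comp, add_zero]
      rw [reassoc_of% (algH1 C i e₁ e₂ ψ hψ₁)]
      simp [Preadditive.add_comp, Preadditive.comp_add]
    · by_cases h' : i = n + 1
      · subst h'
        rw [hHom_zero C n e₁ e₂ ψ (n + 1 + 1) (n + 1) (by omega),
          hHom_pos C n e₁ e₂ ψ (n + 1) (n + 1 - 1) rfl (by omega),
          d_congr_left (show n + 1 - 1 = n by omega) (K := C), fHom_n1, gHom_n1]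
        simp only [Category.assoc, eqToHom_trans_assoc, eqToHom_refl, Category.id_comp,
          Category.comp_id, comp_zero, zero_add]
        rw [reassoc_of% (algH2 C n e₁ e₂ ψ hψ₂)]
        simp [Preadditive.add_comp, Preadditive.comp_add]
      · rw [hHom_zero C n e₁ e₂ ψ (i + 1) i (by omega),
          hHom_zero C n e₁ e₂ ψ i (i - 1) (by omega),
          fHom_generic C n e₁ e₂ ψ i h h', gHom_generic C n e₁ e₂ ψ i h h']
        simp

end Equiv

end Stmt9Aux

/-- **Gaussian elimination.** If the chain spaces in degrees `n`, `n+1` of a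
cochain complex `C` of `R`-modules decompose as `C₁ⁿ ⊕ C₂ⁿ` and `C₁ⁿ⁺¹ ⊕ C₂ⁿ⁺¹`, with the
differential `dⁿ` given in block form by `[[φ, δ], [γ, ε]]` and `φ` an isomorphism (with
two-sided inverse `ψ`), then `C` is chain homotopy equivalent to a complex `C'` which agrees
with `C` outside degrees `n`, `n+1`, has `C'ⁿ = C₂ⁿ`, `C'ⁿ⁺¹ = C₂ⁿ⁺¹`, differential
`ε − γ ∘ φ⁻¹ ∘ δ` in degree `n`, restriction `β` of `d^{n-1}` to the second summand in degree
`n-1`, and restriction `ν` of `dⁿ⁺¹` to the second summand in degree `n+1`. -/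
theorem stmt_9 (C : CochainComplex (ModuleCat R) ℤ) (n : ℤ)
    {A B A' B' : ModuleCat R} (e₁ : C.X n ≅ A ⊞ B) (e₂ : C.X (n + 1) ≅ A' ⊞ B')
    (ψ : A' ⟶ A) (hψ₁ : blkPhi C n e₁ e₂ ≫ ψ = 𝟙 A) (hψ₂ : ψ ≫ blkPhi C n e₁ e₂ = 𝟙 A') :
    ∃ (C' : CochainComplex (ModuleCat R) ℤ) (_ : HomotopyEquiv C C')
      (hX : ∀ i, i ≠ n → i ≠ n + 1 → C'.X i = C.X i)
      (en : C'.X n ≅ B) (en1 : C'.X (n + 1) ≅ B'),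
      -- the new degree-`n` differential is `ε − γ ∘ φ⁻¹ ∘ δ`
      (en.inv ≫ C'.d n (n + 1) ≫ en1.hom =
        blkEps C n e₁ e₂ - blkDelta C n e₁ e₂ ≫ ψ ≫ blkGamma C n e₁ e₂) ∧
      -- the degree-`n-1` differential is `β`, the second component of `d^{n-1}`
      (C'.d (n - 1) n ≫ en.hom =
        eqToHom (hX (n - 1) (by omega) (by omega)) ≫ C.d (n - 1) n ≫ e₁.hom ≫ biprod.snd) ∧
      -- the degree-`n+1` differential is `ν`, the restriction of `d^{n+1}` to the
      -- second summand
      (en1.inv ≫ C'.d (n + 1) (n + 1 + 1) =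
        biprod.inr ≫ e₂.inv ≫ C.d (n + 1) (n + 1 + 1) ≫
          eqToHom (hX (n + 1 + 1) (by omega) (by omega)).symm) ∧
      -- outside degrees `n-1`, `n`, `n+1` the differentials of `C'` agree with those of `C`
      (∀ i, ∀ (_ : i ≠ n - 1) (h₂ : i ≠ n) (h₃ : i ≠ n + 1),
        C'.d i (i + 1) = eqToHom (hX i h₂ h₃) ≫ C.d i (i + 1) ≫
          eqToHom (hX (i + 1) (by omega) (by omega)).symm) := by
  refine ⟨Stmt9Aux.Cnew C n e₁ e₂ ψ hψ₁ hψ₂,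
    ⟨Stmt9Aux.F C n e₁ e₂ ψ hψ₁ hψ₂, Stmt9Aux.G C n e₁ e₂ ψ hψ₁ hψ₂,
      Stmt9Aux.H C n e₁ e₂ ψ hψ₁ hψ₂,
      Homotopy.ofEq (Stmt9Aux.gf C n e₁ e₂ ψ hψ₁ hψ₂)⟩,
    fun i h1 h2 => Stmt9Aux.X'_ne C n i h1 h2,
    eqToIso (Stmt9Aux.X'_n C n), eqToIso (Stmt9Aux.X'_n1 C n), ?_, ?_, ?_, ?_⟩
  · rw [Stmt9Aux.Cnew_d, Stmt9Aux.d'_n]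
    simp [eqToIso.hom, eqToIso.inv, eqToHom_trans_assoc]
  · rw [Stmt9Aux.d_cast (Stmt9Aux.Cnew C n e₁ e₂ ψ hψ₁ hψ₂) (show n - 1 + 1 = n by omega),
      Stmt9Aux.Cnew_d, Stmt9Aux.d'_prev C n e₁ e₂ ψ (n - 1) (by omega),
      Stmt9Aux.d_cast C (show n - 1 + 1 = n by omega)]
    simp [eqToIso.hom, eqToHom_trans, eqToHom_trans_assoc]
  · rw [Stmt9Aux.Cnew_d, Stmt9Aux.d'_n1]
    simp [eqToIso.inv, eqToHom_trans_assoc]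
  · intro i h1 h2 h3
    rw [Stmt9Aux.Cnew_d, Stmt9Aux.d'_generic C n e₁ e₂ ψ i h1 h2 h3]

end
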